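/- Dominance propagation used by the structured policy iteration algorithm (equation (20)): let V : 𝒬 → ℝ be monotone and let u ∈ 𝒰. Suppose Q, Q′ ∈ 𝒬 satisfy, for every (n,m) ∈ I, Q′_{n,m} ≥ Q_{n,m} if u_n = m and Q′_{n,m} = Q_{n,m} if u_n ≠ m. If Δ_{u,v}(Q) ≤ 0 for all v ∈ 𝒰 (i.e., u attains min_{v∈𝒰} J_V(Q,v)), then Δ_{u,v}(Q′) ≤ 0 for all v ∈ 𝒰 (i.e., u also attains min_{v∈𝒰} J_V(Q′,v)). -/

import Mathlib

open Finset

namespace HetNet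

/-- The queue index set `I = {(n,m) : 0 ≤ n ≤ N, m ∈ M_n}`. -/
abbrev Idx {N M : ℕ} (cache : Fin (N + 1) → Finset (Fin M)) : Type :=
  {p : Fin (N + 1) × Fin M // p.2 ∈ cache p.1}

/-- The feasible action space `𝒰`: each BS schedules a cached content or idles (`none`),
and the MBS (BS `0`) and the SBSs do not operate concurrently. -/
def Feasible {N M : ℕ} (cache : Fin (N + 1) → Finset (Fin M))
    (u : Fin (N + 1) → Option (Fin M)) : Prop :=
  (∀ n m, u n = some m → m ∈ cache n) ∧ (u 0 ≠ none → ∀ n, n ≠ 0 → u n = none)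

instance {N M : ℕ} (cache : Fin (N + 1) → Finset (Fin M)) :
    DecidablePred (Feasible cache) := by
  intro u; unfold Feasible; infer_instance

instance {N M : ℕ} (cache : Fin (N + 1) → Finset (Fin M)) :
    Nonempty {u : Fin (N + 1) → Option (Fin M) // Feasible cache u} :=
  ⟨⟨fun _ => none, by
    unfold Feasible
    exact ⟨fun _ _ h => (nomatch h), fun h => absurd rfl h⟩⟩⟩

/-- Queue `(n,m)` is served by action `u`. -/
def Served {N M : ℕ} (u : Fin (N + 1) → Option (Fin M)) (n : Fin (N + 1)) (m : Fin M) : Prop :=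
  (n = 0 ∧ u 0 = some m) ∨ (n ≠ 0 ∧ (u 0 = some m ∨ u n = some m))

instance {N M : ℕ} (u : Fin (N + 1) → Option (Fin M)) (n : Fin (N + 1)) (m : Fin M) :
    Decidable (Served u n m) := by unfold Served; infer_instance

/-- The queue transition map `T(Q,u,A)`. -/
def T {N M : ℕ} {cache : Fin (N + 1) → Finset (Fin M)} (bound : Idx cache → ℕ)
    (Q : Idx cache → ℕ) (u : Fin (N + 1) → Option (Fin M)) (A : Idx cache → ℕ) :
    Idx cache → ℕ := fun i =>
  if Served u i.val.1 i.val.2 then min (A i) (bound i) else min (Q i + A i) (bound i)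

/-- The network power cost `p(u) = Σ_n p(n, u_n)` (with `p(n,0) = 0` for an idling BS). -/
def pcost {N M : ℕ} (p : Fin (N + 1) → Fin M → ℝ) (u : Fin (N + 1) → Option (Fin M)) : ℝ :=
  ∑ n, (u n).elim 0 (p n)

/-- The sum request queue length `d(Q)`. -/
def dcost {N M : ℕ} {cache : Fin (N + 1) → Finset (Fin M)} (Q : Idx cache → ℕ) : ℝ :=
  ∑ i, (Q i : ℝ)

/-- The per-stage cost `g(Q,u) = d(Q) + w·p(u)`. -/
def gcost {N M : ℕ} (p : Fin (N + 1) → Fin M → ℝ) (w : ℝ)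
    {cache : Fin (N + 1) → Finset (Fin M)}
    (Q : Idx cache → ℕ) (u : Fin (N + 1) → Option (Fin M)) : ℝ :=
  dcost Q + w * pcost p u

/-- The state-action cost `J_V(Q,u) = g(Q,u) + Σ_{A∈𝒜} P(A)·V(T(Q,u,A))`. -/
def Jcost {N M : ℕ} (p : Fin (N + 1) → Fin M → ℝ) (w : ℝ)
    {cache : Fin (N + 1) → Finset (Fin M)} (bound : Idx cache → ℕ)
    {ι : Type} [Fintype ι] (P : ι → ℝ) (A : ι → Idx cache → ℕ)
    (V : (Idx cache → ℕ) → ℝ) (Q : Idx cache → ℕ)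
    (u : Fin (N + 1) → Option (Fin M)) : ℝ :=
  gcost p w Q u + ∑ a, P a * V (T bound Q u (A a))

/-- dominance propagation, equation (20): let `V` be monotone and `u ∈ 𝒰`.
Suppose `Q, Q′ ∈ 𝒬` satisfy, for every `(n,m) ∈ I`, `Q′_{n,m} ≥ Q_{n,m}` if `u_n = m` and
`Q′_{n,m} = Q_{n,m}` if `u_n ≠ m`.  If `Δ_{u,v}(Q) ≤ 0` for all `v ∈ 𝒰`, then
`Δ_{u,v}(Q′) ≤ 0` for all `v ∈ 𝒰`. -/
theorem dominance_propagation {N M : ℕ} (cache : Fin (N + 1) → Finset (Fin M))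
    (hcache0 : ∀ m : Fin M, m ∈ cache 0)
    (bound : Idx cache → ℕ)
    (p : Fin (N + 1) → Fin M → ℝ) (hp : ∀ n m, 0 ≤ p n m)
    (w : ℝ) (hw : 0 ≤ w)
    {ι : Type} [Fintype ι] (P : ι → ℝ) (A : ι → Idx cache → ℕ)
    (hP : ∀ a, 0 ≤ P a) (hPsum : ∑ a, P a = 1)
    (V : (Idx cache → ℕ) → ℝ)
    (hV : ∀ Q₁ Q₂ : Idx cache → ℕ, (∀ i, Q₁ i ≤ bound i) → (∀ i, Q₂ i ≤ bound i) →
      (∀ i, Q₁ i ≤ Q₂ i) → V Q₁ ≤ V Q₂)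
    (u : Fin (N + 1) → Option (Fin M)) (hu : Feasible cache u)
    (Q Q' : Idx cache → ℕ)
    (hQ : ∀ i, Q i ≤ bound i) (hQ' : ∀ i, Q' i ≤ bound i)
    (hcond : ∀ i : Idx cache,
      (u i.val.1 = some i.val.2 → Q i ≤ Q' i) ∧ (u i.val.1 ≠ some i.val.2 → Q' i = Q i))
    (hdom : ∀ v, Feasible cache v →
      Jcost p w bound P A V Q u - Jcost p w bound P A V Q v ≤ 0) :
    ∀ v, Feasible cache v →
      Jcost p w bound P A V Q' u - Jcost p w bound P A V Q' v ≤ 0 := by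
  intro v hv
  have hle : ∀ i, Q i ≤ Q' i := fun i => by
    by_cases h : u i.val.1 = some i.val.2
    · exact (hcond i).1 h
    · exact ((hcond i).2 h).ge
  have hTu : T bound Q' u = T bound Q u := by
    funext Aa i
    unfold T
    by_cases h : Served u i.val.1 i.val.2
    · simp [h]
    · simp only [h, if_false]
      have heq : Q' i = Q i := by
        apply (hcond i).2
        intro heq
        apply h
        unfold Served
        by_cases h0 : i.val.1 = 0
        · exact Or.inl ⟨h0, h0 ▸ heq⟩
        · exact Or.inr ⟨h0, Or.inr heq⟩
      rw [heq]
  have hTbound : ∀ (R : Idx cache → ℕ) u' a (i : Idx cache),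
      T bound R u' (A a) i ≤ bound i := by
    intro R u' a i; unfold T; split <;> exact min_le_right _ _
  have hTv : ∀ a (i : Idx cache), T bound Q v (A a) i ≤ T bound Q' v (A a) i := by
    intro a i
    unfold T
    split
    · exact le_rfl
    · exact min_le_min (Nat.add_le_add_right (hle i) _) le_rfl
  have hVle : ∀ a, V (T bound Q v (A a)) ≤ V (T bound Q' v (A a)) := fun a =>
    hV _ _ (fun i => hTbound _ _ _ _) (fun i => hTbound _ _ _ _) (hTv a)
  have key := hdom v hv
  unfold Jcost gcost at *
  rw [hTu]
  have hsum : ∑ a, P a * V (T bound Q v (A a)) ≤ ∑ a, P a * V (T bound Q' v (A a)) :=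
    Finset.sum_le_sum fun a _ => mul_le_mul_of_nonneg_left (hVle a) (hP a)
  linarith

end HetNet
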